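/- Let r, k', k be positive integers with k = r·k', and let B be a family of k'-element subsets of [k] = {1, …, k} such that for every partition of [k] into r parts each of size k', at least one part belongs to B. Then |B| ≥ (1/r)·C(k, k'). -/

import Mathlib

open Finset

lemma fiber_bound (k k' : ℕ) (T S : Finset (Fin k)) (hT : T.card = k') (hS : S.card = k') :
    (Finset.univ.filter (fun σ : Equiv.Perm (Fin k) => T.image σ = S)).card ≤
      k'.factorial * (k - k').factorial := by
  classical
  have hne : Nonempty ((↥T ↪ ↥S) × (↥Tᶜ ↪ ↥Sᶜ)) := by
    constructor
    refine ⟨Nonempty.some ?_, Nonempty.some ?_⟩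
    · rw [Function.Embedding.nonempty_iff_card_le]
      simp [hT, hS]
    · rw [Function.Embedding.nonempty_iff_card_le]
      simp [Finset.card_compl, hT, hS]
  have hmem1 : ∀ (σ : Equiv.Perm (Fin k)), T.image σ = S → ∀ x : Fin k, x ∈ T → σ x ∈ S := by
    intro σ h x hx
    rw [← h]
    exact Finset.mem_image_of_mem _ hx
  have hmem2 : ∀ (σ : Equiv.Perm (Fin k)), T.image σ = S → ∀ x : Fin k, x ∈ Tᶜ → σ x ∈ Sᶜ := by
    intro σ h x hx
    rw [Finset.mem_compl] at hx ⊢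
    intro hs
    rw [← h, Finset.mem_image] at hs
    obtain ⟨y, hy, hyx⟩ := hs
    exact hx (σ.injective hyx ▸ hy)
  set f : Equiv.Perm (Fin k) → ((↥T ↪ ↥S) × (↥Tᶜ ↪ ↥Sᶜ)) := fun σ =>
    if h : T.image σ = S then
      (⟨fun x => ⟨σ x.1, hmem1 σ h x.1 x.2⟩, fun a b hab => by
          apply Subtype.ext; exact σ.injective (congrArg Subtype.val hab)⟩,
       ⟨fun x => ⟨σ x.1, hmem2 σ h x.1 x.2⟩, fun a b hab => by
          apply Subtype.ext; exact σ.injective (congrArg Subtype.val hab)⟩)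
    else hne.some with hf
  calc (Finset.univ.filter (fun σ : Equiv.Perm (Fin k) => T.image σ = S)).card
      ≤ (Finset.univ : Finset ((↥T ↪ ↥S) × (↥Tᶜ ↪ ↥Sᶜ))).card := by
        apply Finset.card_le_card_of_injOn f (fun _ _ => Finset.mem_univ _)
        intro σ hσ τ hτ hfeq
        rw [Finset.mem_coe, Finset.mem_filter] at hσ hτ
        apply Equiv.ext
        intro x
        by_cases hx : x ∈ T
        · have := congrArg (fun p => (p.1 ⟨x, hx⟩ : ↥S).1) hfeq
          simp only [hf, dif_pos hσ.2, dif_pos hτ.2] at this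
          exact this
        · have hx' : x ∈ Tᶜ := Finset.mem_compl.mpr hx
          have := congrArg (fun p => (p.2 ⟨x, hx'⟩ : ↥Sᶜ).1) hfeq
          simp only [hf, dif_pos hσ.2, dif_pos hτ.2] at this
          exact this
    _ = k'.factorial * (k - k').factorial := by
        rw [Finset.card_univ, Fintype.card_prod, Fintype.card_embedding_eq,
          Fintype.card_embedding_eq]
        simp [hT, hS, Finset.card_compl, Nat.descFactorial_self]

/-- Let r, k', k be positive integers with k = r·k', and let B be a family of
k'-element subsets of [k] such that for every partition of [k] into r parts each of size k',
at least one part belongs to B. Then |B| ≥ (1/r)·C(k, k'). -/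
theorem stmt_1 (r k' k : ℕ) (hr : 0 < r) (hk' : 0 < k') (hk : k = r * k')
    (B : Finset (Finset (Fin k))) (hB : ∀ e ∈ B, e.card = k')
    (hpart : ∀ A : Fin r → Finset (Fin k),
      (∀ i, (A i).card = k') → Pairwise (Function.onFun Disjoint A) →
      Finset.univ.biUnion A = Finset.univ → ∃ i, A i ∈ B) :
    k.choose k' ≤ r * B.card := by
  classical
  have hk'le : k' ≤ k := by
    subst hk; exact Nat.le_mul_of_pos_left k' hr
  set e : Fin r × Fin k' ≃ Fin k := finProdFinEquiv.trans (finCongr hk.symm) with he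
  set blk : Fin r → Finset (Fin k) := fun i => Finset.univ.image (fun j => e (i, j)) with hblk
  have hmem : ∀ (x : Fin k) (i : Fin r), x ∈ blk i ↔ (e.symm x).1 = i := by
    intro x i
    simp only [hblk, Finset.mem_image, Finset.mem_univ, true_and]
    constructor
    · rintro ⟨j, rfl⟩; simp
    · intro h
      refine ⟨(e.symm x).2, ?_⟩
      conv_rhs => rw [← e.apply_symm_apply x]
      rw [← h]
  have hblkcard : ∀ i, (blk i).card = k' := by
    intro i
    rw [hblk]
    rw [Finset.card_image_of_injective _ (fun a b hab => by
      simpa using (Prod.mk.injEq .. ▸ e.injective hab).2)]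
    simp
  -- the partition associated to a permutation
  set A : Equiv.Perm (Fin k) → Fin r → Finset (Fin k) :=
    fun σ i => (blk i).image σ with hA
  have hAcard : ∀ σ i, (A σ i).card = k' := fun σ i => by
    rw [hA, Finset.card_image_of_injective _ σ.injective]; exact hblkcard i
  have hAdisj : ∀ σ, Pairwise (Function.onFun Disjoint (A σ)) := by
    intro σ i j hij
    rw [hA, Function.onFun]
    rw [Finset.disjoint_image σ.injective]
    rw [Finset.disjoint_left]
    intro x hx hx'
    rw [hmem] at hx hx'
    exact hij (hx ▸ hx')
  have hAunion : ∀ σ, Finset.univ.biUnion (A σ) = Finset.univ := by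
    intro σ
    apply Finset.eq_univ_iff_forall.mpr
    intro x
    rw [Finset.mem_biUnion]
    refine ⟨(e.symm (σ.symm x)).1, Finset.mem_univ _, ?_⟩
    rw [hA, Finset.mem_image]
    exact ⟨σ.symm x, (hmem _ _).mpr rfl, σ.apply_symm_apply x⟩
  have hex : ∀ σ : Equiv.Perm (Fin k), ∃ i, A σ i ∈ B :=
    fun σ => hpart (A σ) (hAcard σ) (hAdisj σ) (hAunion σ)
  set g : Equiv.Perm (Fin k) → Fin r × Finset (Fin k) :=
    fun σ => ((hex σ).choose, A σ (hex σ).choose) with hg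
  have hgmem : ∀ σ : Equiv.Perm (Fin k), σ ∈ (Finset.univ : Finset (Equiv.Perm (Fin k))) →
      g σ ∈ Finset.univ ×ˢ B := by
    intro σ _
    rw [Finset.mem_product]
    exact ⟨Finset.mem_univ _, (hex σ).choose_spec⟩
  have key := Finset.card_eq_sum_card_fiberwise hgmem
  rw [Finset.card_univ, Fintype.card_perm, Fintype.card_fin] at key
  have hbound : ∀ p ∈ Finset.univ ×ˢ B,
      (Finset.univ.filter (fun σ => g σ = p)).card ≤ k'.factorial * (k - k').factorial := by
    rintro ⟨i, S⟩ hp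
    rw [Finset.mem_product] at hp
    calc (Finset.univ.filter (fun σ => g σ = (i, S))).card
        ≤ (Finset.univ.filter (fun σ : Equiv.Perm (Fin k) => (blk i).image σ = S)).card := by
          apply Finset.card_le_card
          intro σ hσ
          rw [Finset.mem_filter] at hσ ⊢
          refine ⟨Finset.mem_univ _, ?_⟩
          have h1 : (hex σ).choose = i := congrArg Prod.fst hσ.2
          have h2 : A σ (hex σ).choose = S := congrArg Prod.snd hσ.2
          have h3 : A σ i = S := h1 ▸ h2
          exact h3
      _ ≤ k'.factorial * (k - k').factorial :=
          fiber_bound k k' (blk i) S (hblkcard i) (hB S hp.2)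
  have hsum : k.factorial ≤ (r * B.card) * (k'.factorial * (k - k').factorial) := by
    rw [key]
    calc ∑ p ∈ Finset.univ ×ˢ B, (Finset.univ.filter (fun σ => g σ = p)).card
        ≤ ∑ _p ∈ Finset.univ ×ˢ B, k'.factorial * (k - k').factorial :=
          Finset.sum_le_sum hbound
      _ = (r * B.card) * (k'.factorial * (k - k').factorial) := by
          rw [Finset.sum_const, Finset.card_product, Finset.card_univ, Fintype.card_fin,
            smul_eq_mul]
  have hfact : k.choose k' * (k'.factorial * (k - k').factorial) = k.factorial := by
    rw [← mul_assoc]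
    exact Nat.choose_mul_factorial_mul_factorial hk'le
  have := hfact ▸ hsum
  exact Nat.le_of_mul_le_mul_right this (Nat.mul_pos (Nat.factorial_pos _) (Nat.factorial_pos _))
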